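/- The nonzero eigenvalues (counted with multiplicity) of the Neumann problem (-1)^q U^{(2q)} = Λ^{2q} U, U^{(m)}(0) = U^{(m)}(1) = 0 for m = q,...,2q-1, coincide with the eigenvalues of the Dirichlet problem with boundary conditions U^{(m)}(0) = U^{(m)}(1) = 0 for m = 0,...,q-1. Moreover the Dirichlet problem has trivial kernel while the Neumann kernel has dimension q. -/

import Mathlib

open Complex

private lemma iteratedDeriv_add' {n : ℕ} {U V : ℝ → ℂ} (hU : ContDiff ℝ (⊤ : ℕ∞) U)
    (hV : ContDiff ℝ (⊤ : ℕ∞) V) (x : ℝ) :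
    iteratedDeriv n (U + V) x = iteratedDeriv n U x + iteratedDeriv n V x := by
  simp only [← iteratedDerivWithin_univ]
  exact iteratedDerivWithin_add (Set.mem_univ x) uniqueDiffOn_univ
    ((hU.of_le (by exact_mod_cast le_top) : ContDiff ℝ n U).contDiffWithinAt)
    ((hV.of_le (by exact_mod_cast le_top) : ContDiff ℝ n V).contDiffWithinAt)

private lemma iteratedDeriv_smul' {n : ℕ} {U : ℝ → ℂ} (hU : ContDiff ℝ (⊤ : ℕ∞) U)
    (c : ℂ) (x : ℝ) :
    iteratedDeriv n (c • U) x = c • iteratedDeriv n U x := by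
  simp only [← iteratedDerivWithin_univ]
  exact iteratedDerivWithin_const_smul (Set.mem_univ x) uniqueDiffOn_univ c
    ((hU.of_le (by exact_mod_cast le_top) : ContDiff ℝ n U).contDiffWithinAt)

private lemma iteratedDeriv_zero_fun' {n : ℕ} (x : ℝ) :
    iteratedDeriv n (0 : ℝ → ℂ) x = 0 := by
  rw [iteratedDeriv_eq_iteratedFDeriv]
  have : (iteratedFDeriv ℝ n fun _ : ℝ ↦ (0 : ℂ)) = 0 := iteratedFDeriv_zero_fun
  simp only [Pi.zero_def] at this ⊢
  rw [this]
  rfl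

open Polynomial


private lemma smooth_iteratedDeriv {U : ℝ → ℂ} (hU : ContDiff ℝ (⊤ : ℕ∞) U) (n : ℕ) :
    ContDiff ℝ (⊤ : ℕ∞) (iteratedDeriv n U) := by
  rw [iteratedDeriv_eq_iterate]
  exact hU.iterate_deriv n

private lemma iteratedDeriv_iteratedDeriv (m n : ℕ) (f : ℝ → ℂ) :
    iteratedDeriv m (iteratedDeriv n f) = iteratedDeriv (m + n) f := by
  simp only [iteratedDeriv_eq_iterate, ← Function.iterate_add_apply]

private lemma contDiff_evalPoly (P : ℂ[X]) : ContDiff ℝ (⊤ : ℕ∞) (fun x : ℝ => P.eval (x : ℂ)) := by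
  induction P using Polynomial.induction_on' with
  | add p q hp hq => simpa [Polynomial.eval_add] using hp.add hq
  | monomial n a =>
      simp only [Polynomial.eval_monomial]
      exact contDiff_const.mul (Complex.ofRealCLM.contDiff.pow n)

private lemma deriv_evalPoly (P : ℂ[X]) :
    deriv (fun x : ℝ => P.eval (x : ℂ)) = fun x : ℝ => P.derivative.eval (x : ℂ) :=
  funext fun x => ((P.hasDerivAt (x : ℂ)).comp_ofReal).deriv

private lemma iteratedDeriv_evalPoly (m : ℕ) (P : ℂ[X]) :
    iteratedDeriv m (fun x : ℝ => P.eval (x : ℂ))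
      = fun x : ℝ => (derivative^[m] P).eval (x : ℂ) := by
  induction m generalizing P with
  | zero => simp
  | succ m ih =>
      rw [iteratedDeriv_succ', deriv_evalPoly, ih, Function.iterate_succ_apply]

noncomputable def antider (P : ℂ[X]) : ℂ[X] := P.sum fun i a => C (a / (i + 1)) * X ^ (i + 1)

private lemma derivative_antider (P : ℂ[X]) : derivative (antider P) = P := by
  conv_rhs => rw [← P.sum_C_mul_X_pow_eq]
  rw [antider, Polynomial.sum, map_sum]
  rw [Polynomial.sum]
  refine Finset.sum_congr rfl fun i _ => ?_
  rw [derivative_C_mul_X_pow]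
  have h : ((i : ℂ) + 1) ≠ 0 := Nat.cast_add_one_ne_zero i
  push_cast
  rw [div_mul_cancel₀ _ h]

private lemma antider_mem (n : ℕ) (P : ℂ[X]) (hP : P ∈ degreeLT ℂ n) :
    antider P ∈ degreeLT ℂ (n + 1) := by
  rw [mem_degreeLT] at hP
  refine Submodule.sum_mem _ fun i hi => ?_
  rw [mem_degreeLT]
  refine lt_of_le_of_lt (degree_C_mul_X_pow_le _ _) ?_
  have h1 : (i : WithBot ℕ) ≤ P.degree := le_degree_of_ne_zero (by simpa using hi)
  have h2 : (i : WithBot ℕ) < n := lt_of_le_of_lt h1 hP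
  exact_mod_cast by exact_mod_cast Nat.cast_lt.mpr (by exact_mod_cast Nat.add_lt_add_right (by exact_mod_cast h2) 1)
private lemma polyRep : ∀ (n : ℕ) {U : ℝ → ℂ}, ContDiff ℝ (⊤ : ℕ∞) U →
    (∀ x, iteratedDeriv n U x = 0) →
    ∃ P ∈ degreeLT ℂ n, ∀ x : ℝ, U x = P.eval (x : ℂ) := by
  intro n
  induction n with
  | zero =>
      intro U hU h
      refine ⟨0, ?_, fun x => by simpa using h x⟩
      simpa [mem_degreeLT] using WithBot.bot_lt_coe 0
  | succ n ih =>
      intro U hU h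
      have hU' : ContDiff ℝ (⊤ : ℕ∞) (deriv U) := by
        have := (contDiff_infty_iff_deriv.mp (by exact_mod_cast hU)).2
        exact_mod_cast this
      have h' : ∀ x, iteratedDeriv n (deriv U) x = 0 := by
        intro x; rw [← iteratedDeriv_succ']; exact h x
      obtain ⟨P, hPmem, hPeq⟩ := ih hU' h'
      set Q := antider P with hQ
      set g : ℝ → ℂ := fun x => U x - Q.eval (x : ℂ) with hg
      have hgd : ∀ x, HasDerivAt g 0 x := by
        intro x
        have h1 : HasDerivAt U (P.eval (x : ℂ)) x := by
          have := ((hU.differentiable (by simp)) x).hasDerivAt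
          rwa [hPeq x] at this
        have h2 : HasDerivAt (fun y : ℝ => Q.eval (y : ℂ)) (P.eval (x : ℂ)) x := by
          have := (Q.hasDerivAt ((x : ℝ) : ℂ)).comp_ofReal
          rwa [derivative_antider] at this
        have h3 := h1.sub h2
        rw [sub_self] at h3
        exact h3
      have hconst : ∀ x, g x = g 0 := fun x =>
        is_const_of_deriv_eq_zero (fun y => (hgd y).differentiableAt)
          (fun y => (hgd y).deriv) x 0
      refine ⟨Q + C (g 0), ?_, fun x => ?_⟩
      · refine Submodule.add_mem _ (antider_mem n P hPmem) ?_
        rw [mem_degreeLT]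
        exact lt_of_le_of_lt degree_C_le (by exact_mod_cast Nat.cast_pos.mpr n.succ_pos)
      · have h3 := hconst x
        simp only [hg] at h3
        simp only [eval_add, eval_C, hg]
        rw [← h3]
        ring

private lemma pow_dvd_of_eval_iterate_deriv (P : ℂ[X]) (a : ℂ) (n : ℕ)
    (h : ∀ m < n, (derivative^[m] P).eval a = 0) : (X - C a) ^ n ∣ P := by
  rcases eq_or_ne P 0 with rfl | hP
  · exact dvd_zero _
  rcases Nat.eq_zero_or_pos n with rfl | hn
  · simpa using one_dvd _
  have hlt : n - 1 < P.rootMultiplicity a :=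
    Polynomial.lt_rootMultiplicity_of_isRoot_iterate_derivative hP
      (fun m hm => h m (by omega))
  exact (pow_dvd_pow _ (by omega : n ≤ P.rootMultiplicity a)).trans
    (P.pow_rootMultiplicity_dvd a)

private lemma eq_zero_of_vanish (P : ℂ[X]) (a : ℂ) (n : ℕ) (hd : P.degree < n)
    (h : ∀ m < n, (derivative^[m] P).eval a = 0) : P = 0 := by
  by_contra hP
  have hdvd := pow_dvd_of_eval_iterate_deriv P a n h
  have := Polynomial.natDegree_le_of_dvd hdvd hP
  rw [natDegree_pow, natDegree_X_sub_C, mul_one] at this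
  have := Polynomial.natDegree_lt_iff_degree_lt hP |>.mpr hd
  omega

private lemma eq_zero_of_vanish_two (P : ℂ[X]) (q : ℕ) (hd : P.degree < (2 * q : ℕ))
    (h0 : ∀ m < q, (derivative^[m] P).eval 0 = 0)
    (h1 : ∀ m < q, (derivative^[m] P).eval 1 = 0) : P = 0 := by
  by_contra hP
  have d0 := pow_dvd_of_eval_iterate_deriv P 0 q h0
  have d1 := pow_dvd_of_eval_iterate_deriv P 1 q h1
  have hcop : IsCoprime ((X - C (0 : ℂ)) ^ q) ((X - C (1 : ℂ)) ^ q) :=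
    (Polynomial.isCoprime_X_sub_C_of_isUnit_sub (by norm_num)).pow
  have hdvd := hcop.mul_dvd d0 d1
  have hle := Polynomial.natDegree_le_of_dvd hdvd hP
  have hmul : ((X - C (0 : ℂ)) ^ q * (X - C 1) ^ q).natDegree = 2 * q := by
    rw [natDegree_mul (pow_ne_zero _ (X_sub_C_ne_zero 0)) (pow_ne_zero _ (X_sub_C_ne_zero 1)),
      natDegree_pow, natDegree_pow, natDegree_X_sub_C, natDegree_X_sub_C]
    ring
  have := Polynomial.natDegree_lt_iff_degree_lt hP |>.mpr hd
  omega

-- kernel parts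
private noncomputable def evalL : ℂ[X] →ₗ[ℂ] (ℝ → ℂ) where
  toFun P := fun x : ℝ => P.eval (x : ℂ)
  map_add' P Q := by funext x; simp
  map_smul' c P := by funext x; simp

private lemma evalL_injective : Function.Injective evalL := by
  rw [injective_iff_map_eq_zero]
  intro P hP
  apply P.eq_zero_of_infinite_isRoot
  apply Set.infinite_of_injective_forall_mem (f := fun x : ℝ => (x : ℂ)) Complex.ofReal_injective
  intro x
  exact congrFun hP x


/-- The eigenspace of the Dirichlet problem
`(-1)^q U^{(2q)} = μ U`, `U^{(m)}(0) = U^{(m)}(1) = 0` for `m = 0, …, q-1`. -/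
noncomputable def dirichletEigenspace (q : ℕ) (μ : ℂ) : Submodule ℂ (ℝ → ℂ) where
  carrier := {U | ContDiff ℝ (⊤ : ℕ∞) U ∧
    (∀ x : ℝ, (-1 : ℂ) ^ q * iteratedDeriv (2 * q) U x = μ * U x) ∧
    ∀ m : ℕ, m < q → iteratedDeriv m U 0 = 0 ∧ iteratedDeriv m U 1 = 0}
  add_mem' := by
    rintro U V ⟨hU, hUo, hUb⟩ ⟨hV, hVo, hVb⟩
    refine ⟨hU.add hV, fun x => ?_, fun m hm => ?_⟩
    · simp only [iteratedDeriv_add' hU hV, Pi.add_apply, mul_add, hUo x, hVo x]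
    · constructor <;> rw [iteratedDeriv_add' hU hV] <;>
        simp [(hUb m hm).1, (hUb m hm).2, (hVb m hm).1, (hVb m hm).2]
  zero_mem' := by
    refine ⟨contDiff_const, fun x => ?_, fun m hm => ?_⟩
    · simp [iteratedDeriv_zero_fun']
    · simp [iteratedDeriv_zero_fun']
  smul_mem' := by
    rintro c U ⟨hU, hUo, hUb⟩
    refine ⟨hU.const_smul c, fun x => ?_, fun m hm => ?_⟩
    · rw [iteratedDeriv_smul' hU, Pi.smul_apply, smul_eq_mul, smul_eq_mul]
      calc (-1 : ℂ) ^ q * (c * iteratedDeriv (2 * q) U x)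
          = c * ((-1 : ℂ) ^ q * iteratedDeriv (2 * q) U x) := by ring
        _ = c * (μ * U x) := by rw [hUo x]
        _ = μ * (c * U x) := by ring
    · constructor <;> rw [iteratedDeriv_smul' hU] <;>
        simp [(hUb m hm).1, (hUb m hm).2]

/-- The eigenspace of the Neumann problem
`(-1)^q U^{(2q)} = μ U`, `U^{(m)}(0) = U^{(m)}(1) = 0` for `m = q, …, 2q-1`. -/
noncomputable def neumannEigenspace (q : ℕ) (μ : ℂ) : Submodule ℂ (ℝ → ℂ) where
  carrier := {U | ContDiff ℝ (⊤ : ℕ∞) U ∧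
    (∀ x : ℝ, (-1 : ℂ) ^ q * iteratedDeriv (2 * q) U x = μ * U x) ∧
    ∀ m : ℕ, q ≤ m → m < 2 * q → iteratedDeriv m U 0 = 0 ∧ iteratedDeriv m U 1 = 0}
  add_mem' := by
    rintro U V ⟨hU, hUo, hUb⟩ ⟨hV, hVo, hVb⟩
    refine ⟨hU.add hV, fun x => ?_, fun m hm hm' => ?_⟩
    · simp only [iteratedDeriv_add' hU hV, Pi.add_apply, mul_add, hUo x, hVo x]
    · constructor <;> rw [iteratedDeriv_add' hU hV] <;>
        simp [(hUb m hm hm').1, (hUb m hm hm').2, (hVb m hm hm').1, (hVb m hm hm').2]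
  zero_mem' := by
    refine ⟨contDiff_const, fun x => ?_, fun m hm hm' => ?_⟩
    · simp [iteratedDeriv_zero_fun']
    · simp [iteratedDeriv_zero_fun']
  smul_mem' := by
    rintro c U ⟨hU, hUo, hUb⟩
    refine ⟨hU.const_smul c, fun x => ?_, fun m hm hm' => ?_⟩
    · rw [iteratedDeriv_smul' hU, Pi.smul_apply, smul_eq_mul, smul_eq_mul]
      calc (-1 : ℂ) ^ q * (c * iteratedDeriv (2 * q) U x)
          = c * ((-1 : ℂ) ^ q * iteratedDeriv (2 * q) U x) := by ring
        _ = c * (μ * U x) := by rw [hUo x]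
        _ = μ * (c * U x) := by ring
    · constructor <;> rw [iteratedDeriv_smul' hU] <;>
        simp [(hUb m hm hm').1, (hUb m hm hm').2]

private lemma neg_one_pow_sq (q : ℕ) : ((-1 : ℂ) ^ q) * ((-1 : ℂ) ^ q) = 1 := by
  rw [← mul_pow]; norm_num

private lemma ode_fun {q : ℕ} {μ : ℂ} {U : ℝ → ℂ}
    (h : ∀ x : ℝ, (-1 : ℂ) ^ q * iteratedDeriv (2 * q) U x = μ * U x) :
    iteratedDeriv (2 * q) U = ((-1 : ℂ) ^ q * μ) • U := by
  funext x
  have hone := neg_one_pow_sq q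
  show iteratedDeriv (2 * q) U x = ((-1 : ℂ) ^ q * μ) * U x
  linear_combination ((-1 : ℂ) ^ q) * h x - (iteratedDeriv (2 * q) U x) * hone

private lemma neumann_to_dirichlet_mem {q : ℕ} {μ : ℂ} {U : ℝ → ℂ}
    (h : U ∈ neumannEigenspace q μ) (hq : 1 ≤ q) :
    iteratedDeriv q U ∈ dirichletEigenspace q μ := by
  obtain ⟨hU, hODE, hbc⟩ := h
  have hone := neg_one_pow_sq q
  have h2q := ode_fun hODE
  refine ⟨smooth_iteratedDeriv hU q, fun x => ?_, fun m hm => ?_⟩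
  · have e1 : iteratedDeriv (2 * q) (iteratedDeriv q U) x
        = iteratedDeriv q (iteratedDeriv (2 * q) U) x := by
      rw [iteratedDeriv_iteratedDeriv, iteratedDeriv_iteratedDeriv,
        show 2 * q + q = q + 2 * q by omega]
    rw [e1, h2q, iteratedDeriv_smul' hU]
    show (-1 : ℂ) ^ q * ((-1 : ℂ) ^ q * μ * iteratedDeriv q U x)
        = μ * iteratedDeriv q U x
    linear_combination (μ * iteratedDeriv q U x) * hone
  · have e1 : ∀ x : ℝ, iteratedDeriv m (iteratedDeriv q U) x = iteratedDeriv (m + q) U x :=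
      fun x => by rw [iteratedDeriv_iteratedDeriv]
    rw [e1, e1]
    exact hbc (m + q) (by omega) (by omega)

private lemma dirichlet_to_neumann_mem {q : ℕ} {μ : ℂ} {U : ℝ → ℂ}
    (h : U ∈ dirichletEigenspace q μ) (hq : 1 ≤ q) :
    (μ⁻¹ * (-1 : ℂ) ^ q) • iteratedDeriv q U ∈ neumannEigenspace q μ := by
  obtain ⟨hU, hODE, hbc⟩ := h
  have hone := neg_one_pow_sq q
  have h2q := ode_fun hODE
  have hDq := smooth_iteratedDeriv hU q
  refine ⟨hDq.const_smul (μ⁻¹ * (-1 : ℂ) ^ q), fun x => ?_, fun m hqm hm2 => ?_⟩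
  · rw [iteratedDeriv_smul' hDq]
    have e1 : iteratedDeriv (2 * q) (iteratedDeriv q U) x
        = iteratedDeriv q (iteratedDeriv (2 * q) U) x := by
      rw [iteratedDeriv_iteratedDeriv, iteratedDeriv_iteratedDeriv,
        show 2 * q + q = q + 2 * q by omega]
    rw [e1, h2q, iteratedDeriv_smul' hU]
    show (-1 : ℂ) ^ q * (μ⁻¹ * (-1 : ℂ) ^ q * ((-1 : ℂ) ^ q * μ * iteratedDeriv q U x))
        = μ * (μ⁻¹ * (-1 : ℂ) ^ q * iteratedDeriv q U x)
    linear_combination (μ⁻¹ * μ * iteratedDeriv q U x * (-1 : ℂ) ^ q) * hone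
  · have key : ∀ x : ℝ, iteratedDeriv m ((μ⁻¹ * (-1 : ℂ) ^ q) • iteratedDeriv q U) x
        = (μ⁻¹ * (-1 : ℂ) ^ q) * ((-1 : ℂ) ^ q * μ * iteratedDeriv (m - q) U x) := by
      intro x
      rw [iteratedDeriv_smul' hDq, iteratedDeriv_iteratedDeriv,
        show m + q = (m - q) + 2 * q by omega, ← iteratedDeriv_iteratedDeriv, h2q,
        iteratedDeriv_smul' hU]
      simp only [smul_eq_mul]
      try ring
    constructor
    · rw [key, (hbc (m - q) (by omega)).1]; simp
    · rw [key, (hbc (m - q) (by omega)).2]; simp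
private noncomputable def dirToNeu (q : ℕ) (μ : ℂ) (hq : 1 ≤ q) :
    dirichletEigenspace q μ →ₗ[ℂ] neumannEigenspace q μ where
  toFun U := ⟨(μ⁻¹ * (-1 : ℂ) ^ q) • iteratedDeriv q U.1, dirichlet_to_neumann_mem U.2 hq⟩
  map_add' U V := by
    apply Subtype.ext
    have hU := U.2.1; have hV := V.2.1
    show (μ⁻¹ * (-1 : ℂ) ^ q) • iteratedDeriv q (U.1 + V.1) = _
    funext x
    simp only [Pi.add_apply, Pi.smul_apply, smul_eq_mul, iteratedDeriv_add' hU hV,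
      Submodule.coe_add]
    ring
  map_smul' c U := by
    apply Subtype.ext
    have hU := U.2.1
    show (μ⁻¹ * (-1 : ℂ) ^ q) • iteratedDeriv q (c • U.1) = _
    funext x
    simp only [Pi.smul_apply, smul_eq_mul, iteratedDeriv_smul' hU, Submodule.coe_smul,
      RingHom.id_apply]
    ring

private noncomputable def neuToDir (q : ℕ) (μ : ℂ) (hq : 1 ≤ q) :
    neumannEigenspace q μ →ₗ[ℂ] dirichletEigenspace q μ where
  toFun U := ⟨iteratedDeriv q U.1, neumann_to_dirichlet_mem U.2 hq⟩
  map_add' U V := by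
    apply Subtype.ext
    have hU := U.2.1; have hV := V.2.1
    show iteratedDeriv q (U.1 + V.1) = _
    funext x
    simp only [Pi.add_apply, iteratedDeriv_add' hU hV, Submodule.coe_add]
  map_smul' c U := by
    apply Subtype.ext
    have hU := U.2.1
    show iteratedDeriv q (c • U.1) = _
    funext x
    simp only [Pi.smul_apply, smul_eq_mul, iteratedDeriv_smul' hU, Submodule.coe_smul,
      RingHom.id_apply]

private lemma recover {q : ℕ} {μ : ℂ} {U : ℝ → ℂ} (hμ : μ ≠ 0)
    (hU : ContDiff ℝ (⊤ : ℕ∞) U)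
    (hODE : ∀ x : ℝ, (-1 : ℂ) ^ q * iteratedDeriv (2 * q) U x = μ * U x) :
    (μ⁻¹ * (-1 : ℂ) ^ q) • iteratedDeriv q (iteratedDeriv q U) = U := by
  have hone := neg_one_pow_sq q
  have hinv : μ * μ⁻¹ = 1 := mul_inv_cancel₀ hμ
  have h2q := ode_fun hODE
  funext x
  show (μ⁻¹ * (-1 : ℂ) ^ q) * iteratedDeriv q (iteratedDeriv q U) x = U x
  rw [iteratedDeriv_iteratedDeriv, show q + q = 2 * q by omega, h2q]
  show (μ⁻¹ * (-1 : ℂ) ^ q) * ((-1 : ℂ) ^ q * μ * U x) = U x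
  linear_combination (μ⁻¹ * μ * U x) * hone + (U x) * hinv

private noncomputable def dirNeuEquiv (q : ℕ) (μ : ℂ) (hq : 1 ≤ q) (hμ : μ ≠ 0) :
    dirichletEigenspace q μ ≃ₗ[ℂ] neumannEigenspace q μ :=
  LinearEquiv.ofLinear (dirToNeu q μ hq) (neuToDir q μ hq)
    (by
      apply LinearMap.ext
      rintro ⟨U, hU⟩
      apply Subtype.ext
      show (μ⁻¹ * (-1 : ℂ) ^ q) • iteratedDeriv q (iteratedDeriv q U) = U
      exact recover hμ hU.1 hU.2.1)
    (by
      apply LinearMap.ext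
      rintro ⟨U, hU⟩
      apply Subtype.ext
      show iteratedDeriv q ((μ⁻¹ * (-1 : ℂ) ^ q) • iteratedDeriv q U) = U
      have hDq := smooth_iteratedDeriv hU.1 q
      funext x
      rw [iteratedDeriv_smul' hDq]
      have := congrFun (recover hμ hU.1 hU.2.1) x
      simpa using this)
private lemma natDegree_lt_of_mem_degreeLT {P : ℂ[X]} {n : ℕ} (hn : 1 ≤ n)
    (h : P ∈ degreeLT ℂ n) : P.natDegree < n := by
  rcases eq_or_ne P 0 with rfl | hP
  · simpa using (by omega : 0 < n)
  · exact (Polynomial.natDegree_lt_iff_degree_lt hP).mpr (mem_degreeLT.mp h)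

private lemma neumann_zero_eq (q : ℕ) (hq : 1 ≤ q) :
    neumannEigenspace q 0 = Submodule.map evalL (degreeLT ℂ q) := by
  apply le_antisymm
  · rintro U ⟨hU, hODE, hbc⟩
    have hne : ((-1 : ℂ) ^ q) ≠ 0 := pow_ne_zero _ (by norm_num)
    have h2q : ∀ x, iteratedDeriv (2 * q) U x = 0 := fun x => by
      have h := hODE x
      rw [zero_mul] at h
      exact (mul_eq_zero.mp h).resolve_left hne
    obtain ⟨P, hPmem, hUeq⟩ := polyRep (2 * q) hU h2q
    have hUfun : U = fun x : ℝ => P.eval (x : ℂ) := funext hUeq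
    have hB : ∀ m : ℕ, iteratedDeriv m U = fun x : ℝ => (derivative^[m] P).eval (x : ℂ) := by
      intro m; rw [hUfun, iteratedDeriv_evalPoly]
    set Q := derivative^[q] P with hQdef
    have hQ0 : Q = 0 := by
      rcases eq_or_ne Q 0 with h | hQ
      · exact h
      have hPne : P ≠ 0 := fun hP => hQ (by rw [hQdef, hP, Polynomial.iterate_derivative_zero])
      have hPd : P.natDegree < 2 * q := natDegree_lt_of_mem_degreeLT (by omega) hPmem
      have hQd : Q.natDegree < q := by
        have h7 := Polynomial.natDegree_iterate_derivative P q
        rw [← hQdef] at h7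
        omega
      refine eq_zero_of_vanish Q 0 q ((Polynomial.natDegree_lt_iff_degree_lt hQ).mp hQd)
        (fun j hj => ?_)
      have h5 := (hbc (j + q) (by omega) (by omega)).1
      rw [hB (j + q)] at h5
      have e1 : derivative^[j] Q = derivative^[j + q] P := by
        rw [hQdef, ← Function.iterate_add_apply]
      rw [e1]
      simpa using h5
    have hcoeff : ∀ m : ℕ, q ≤ m → P.coeff m = 0 := by
      intro m hm
      have h6 : Q.coeff (m - q) = 0 := by rw [hQ0]; simp
      rw [hQdef, Polynomial.coeff_iterate_derivative, show m - q + q = m by omega] at h6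
      have hpos : m.descFactorial q ≠ 0 := by
        rw [Ne, Nat.descFactorial_eq_zero_iff_lt]; omega
      have : ((m.descFactorial q : ℂ)) ≠ 0 := Nat.cast_ne_zero.mpr hpos
      simpa [nsmul_eq_mul, this] using h6
    have hPq : P ∈ degreeLT ℂ q :=
      mem_degreeLT.mpr ((Polynomial.degree_lt_iff_coeff_zero P q).mpr fun m hm => hcoeff m hm)
    exact ⟨P, hPq, hUfun.symm⟩
  · rintro U ⟨P, hP, rfl⟩
    have hnd : P.natDegree < q := natDegree_lt_of_mem_degreeLT hq hP
    have hzero : ∀ m : ℕ, q ≤ m → iteratedDeriv m (evalL P) = 0 := by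
      intro m hm
      show iteratedDeriv m (fun x : ℝ => P.eval (x : ℂ)) = 0
      rw [iteratedDeriv_evalPoly, Polynomial.iterate_derivative_eq_zero (by omega)]
      funext x; simp
    refine ⟨contDiff_evalPoly P, fun x => ?_, fun m hm hm2 => ?_⟩
    · rw [show (iteratedDeriv (2 * q) (evalL P) : ℝ → ℂ) = 0 from hzero (2 * q) (by omega)]
      simp
    · rw [hzero m hm]
      simp
private lemma dirichlet_zero_bot (q : ℕ) (hq : 1 ≤ q) : dirichletEigenspace q 0 = ⊥ := by
  rw [eq_bot_iff]
  rintro U ⟨hU, hODE, hbc⟩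
  have hne : ((-1 : ℂ) ^ q) ≠ 0 := pow_ne_zero _ (by norm_num)
  have h2q : ∀ x, iteratedDeriv (2 * q) U x = 0 := fun x => by
    have h := hODE x
    rw [zero_mul] at h
    exact (mul_eq_zero.mp h).resolve_left hne
  obtain ⟨P, hPmem, hUeq⟩ := polyRep (2 * q) hU h2q
  have hUfun : U = fun x : ℝ => P.eval (x : ℂ) := funext hUeq
  have hB : ∀ m : ℕ, iteratedDeriv m U = fun x : ℝ => (derivative^[m] P).eval (x : ℂ) := by
    intro m; rw [hUfun, iteratedDeriv_evalPoly]
  have hP0 : P = 0 := by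
    refine eq_zero_of_vanish_two P q (mem_degreeLT.mp hPmem) (fun m hm => ?_) (fun m hm => ?_)
    · have h5 := (hbc m hm).1
      rw [hB m] at h5
      simpa using h5
    · have h5 := (hbc m hm).2
      rw [hB m] at h5
      simpa using h5
  have : U = 0 := by rw [hUfun, hP0]; funext x; simp
  simp [this]

private lemma finrank_neumann_zero (q : ℕ) (hq : 1 ≤ q) :
    Module.finrank ℂ (neumannEigenspace q 0) = q := by
  rw [neumann_zero_eq q hq]
  rw [← LinearEquiv.finrank_eq (Submodule.equivMapOfInjective evalL evalL_injective
    (degreeLT ℂ q))]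
  rw [LinearEquiv.finrank_eq (Polynomial.degreeLTEquiv ℂ q)]
  simp [Module.finrank_fin_fun]

/-- The nonzero eigenvalues of the Neumann problem coincide with those of the
Dirichlet problem, with multiplicity (there is a linear isomorphism between the
eigenspaces for every nonzero eigenvalue `μ`); the Dirichlet kernel is trivial
while the Neumann kernel has dimension `q`. -/
theorem dirichlet_neumann_spectra (q : ℕ) (hq : 1 ≤ q) :
    (∀ μ : ℂ, μ ≠ 0 →
      Nonempty (dirichletEigenspace q μ ≃ₗ[ℂ] neumannEigenspace q μ)) ∧
    dirichletEigenspace q 0 = ⊥ ∧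
    Module.finrank ℂ (neumannEigenspace q 0) = q := by
  exact ⟨fun μ hμ => ⟨dirNeuEquiv q μ hq hμ⟩, dirichlet_zero_bot q hq,
    finrank_neumann_zero q hq⟩
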